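/- For all real numbers λ_1 > λ_2 > 0, ∫_0^{2π} λ_1² cos⁴(α) / (λ_1 cos²(α) + λ_2 sin²(α))² dα = 2π (λ_1² − (1/2) √(λ_1 λ_2) (3λ_1 − λ_2)) / (λ_1 − λ_2)². -/

import Mathlib

set_option maxHeartbeats 1000000


open MeasureTheory Real

/-- For λ₁ > λ₂ > 0,
∫₀^{2π} λ₁² cos⁴α / (λ₁ cos²α + λ₂ sin²α)² dα
  = 2π (λ₁² − ½ √(λ₁λ₂) (3λ₁ − λ₂)) / (λ₁ − λ₂)². -/
theorem sscm_angular_integral_fourth_power (l₁ l₂ : ℝ) (h₂ : 0 < l₂) (h₁₂ : l₂ < l₁) :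
    ∫ α in (0 : ℝ)..(2 * π),
        l₁ ^ 2 * Real.cos α ^ 4 / (l₁ * Real.cos α ^ 2 + l₂ * Real.sin α ^ 2) ^ 2
      = 2 * π * (l₁ ^ 2 - (1 / 2) * Real.sqrt (l₁ * l₂) * (3 * l₁ - l₂)) / (l₁ - l₂) ^ 2 := by
  have ha : 0 < l₁ := h₂.trans h₁₂
  have hc : 0 < l₁ - l₂ := sub_pos.mpr h₁₂
  set k : ℝ := Real.sqrt (l₂ / l₁) with hkdef
  have hk : 0 < k := Real.sqrt_pos.mpr (div_pos h₂ ha)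
  have hk2 : l₁ * k ^ 2 = l₂ := by
    rw [hkdef, Real.sq_sqrt (div_pos h₂ ha).le]; field_simp
  have hab : Real.sqrt (l₁ * l₂) = l₁ * k := by
    rw [hkdef, show l₁ * l₂ = l₁ ^ 2 * (l₂ / l₁) by field_simp,
      Real.sqrt_mul (sq_nonneg l₁), Real.sqrt_sq ha.le]
  have hD : ∀ x : ℝ, 0 < l₁ * Real.cos x ^ 2 + l₂ * Real.sin x ^ 2 := by
    intro x
    nlinarith [Real.sin_sq_add_cos_sq x, sq_nonneg (Real.sin x), sq_nonneg (Real.cos x)]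
  have hQ : ∀ x : ℝ, 0 < Real.cos x ^ 2 + k * Real.sin x ^ 2 := by
    intro x
    nlinarith [Real.sin_sq_add_cos_sq x, sq_nonneg (Real.sin x), sq_nonneg (Real.cos x)]
  set A : ℝ := l₁ ^ 2 / (l₁ - l₂) ^ 2 with hA
  set K : ℝ := l₁ * k * (3 * l₁ - l₂) / (2 * (l₁ - l₂) ^ 2) with hK
  set M : ℝ := l₁ * l₂ / (2 * (l₁ - l₂)) with hM
  set F : ℝ → ℝ := fun x => A * x
      - K * (x + Real.arctan ((k - 1) * (Real.sin x * Real.cos x)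
          / (Real.cos x ^ 2 + k * Real.sin x ^ 2)))
      - M * (Real.sin x * Real.cos x / (l₁ * Real.cos x ^ 2 + l₂ * Real.sin x ^ 2)) with hF
  have hderiv : ∀ x : ℝ, HasDerivAt F
      (l₁ ^ 2 * Real.cos x ^ 4 / (l₁ * Real.cos x ^ 2 + l₂ * Real.sin x ^ 2) ^ 2) x := by
    intro x
    have hsc : HasDerivAt (fun y => Real.sin y * Real.cos y)
        (Real.cos x * Real.cos x + Real.sin x * (-Real.sin x)) x :=
      (Real.hasDerivAt_sin x).mul (Real.hasDerivAt_cos x)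
    have hQ' : HasDerivAt (fun y => Real.cos y ^ 2 + k * Real.sin y ^ 2)
        ((2 : ℕ) * Real.cos x ^ 1 * (-Real.sin x) + k * ((2 : ℕ) * Real.sin x ^ 1 * Real.cos x)) x :=
      (((Real.hasDerivAt_cos x).pow 2)).add (((Real.hasDerivAt_sin x).pow 2).const_mul k)
    have hD' : HasDerivAt (fun y => l₁ * Real.cos y ^ 2 + l₂ * Real.sin y ^ 2)
        (l₁ * ((2 : ℕ) * Real.cos x ^ 1 * (-Real.sin x)) + l₂ * ((2 : ℕ) * Real.sin x ^ 1 * Real.cos x)) x :=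
      (((Real.hasDerivAt_cos x).pow 2).const_mul l₁).add (((Real.hasDerivAt_sin x).pow 2).const_mul l₂)
    have hw := ((hsc.const_mul (k - 1)).div hQ' (hQ x).ne')
    have harc := hw.arctan
    have hrat := hsc.div hD' (hD x).ne'
    have hAll := (((hasDerivAt_id x).const_mul A).sub
      (((hasDerivAt_id x).add harc).const_mul K)).sub (hrat.const_mul M)
    convert hAll using 1
    · exact rfl
    · exact rfl
    · rfl
    have hs := Real.sin_sq_add_cos_sq x
    set s := Real.sin x
    set c := Real.cos x
    rw [hA, hK, hM]
    have h1 : (1 : ℝ) + ((k - 1) * (s * c) / (c ^ 2 + k * s ^ 2)) ^ 2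
        = ((c ^ 2 + k * s ^ 2) ^ 2 + ((k - 1) * (s * c)) ^ 2) / (c ^ 2 + k * s ^ 2) ^ 2 := by
      rw [eq_div_iff (pow_ne_zero 2 (hQ x).ne'), add_mul, one_mul, div_pow,
        div_mul_cancel₀ _ (pow_ne_zero 2 (hQ x).ne')]
    have hden : 0 < (c ^ 2 + k * s ^ 2) ^ 2 + ((k - 1) * (s * c)) ^ 2 :=
      add_pos_of_pos_of_nonneg (pow_pos (hQ x) 2) (sq_nonneg _)
    simp only [Pi.div_apply]
    rw [h1]
    have hk1 : k < 1 := by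
      rw [hkdef]
      have : l₂ / l₁ < 1 := (div_lt_one ha).mpr h₁₂
      calc Real.sqrt (l₂ / l₁) < Real.sqrt 1 := by
            exact Real.sqrt_lt_sqrt (div_pos h₂ ha).le this
        _ = 1 := Real.sqrt_one
    have hl₂ : l₂ = l₁ * k ^ 2 := hk2.symm
    rw [hl₂]
    have hQ0 : c ^ 2 + k * s ^ 2 ≠ 0 := (hQ x).ne'
    have hD0 : l₁ * c ^ 2 + l₁ * k ^ 2 * s ^ 2 ≠ 0 := by
      have := hD x; rw [hl₂] at this; exact this.ne'
    have hT0 : (c ^ 2 + k * s ^ 2) ^ 2 + ((k - 1) * (s * c)) ^ 2 ≠ 0 := hden.ne'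
    have hsub : l₁ - l₁ * k ^ 2 ≠ 0 := by nlinarith
    have hE : c ^ 2 + k ^ 2 * s ^ 2 ≠ 0 := by
      intro h; apply hD0; linear_combination l₁ * h
    have hk1' : (1:ℝ) - k ^ 2 ≠ 0 := by nlinarith
    push_cast
    field_simp
    ring
  rw [intervalIntegral.integral_eq_sub_of_hasDerivAt (fun x _ => hderiv x)]
  · rw [hF]
    simp [Real.sin_two_pi, Real.cos_two_pi]
    rw [hA, hK, hab]
    field_simp
  · apply Continuous.intervalIntegrable
    apply Continuous.div
    · continuity
    · continuity
    · exact fun x => pow_ne_zero 2 (hD x).ne'
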